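/- Let A : H → Set H be a maximal monotone set-valued operator with A(u) ≠ ∅ for every u ∈ H, and let B : H → H be a monotone and continuous single-valued operator. Then the set-valued operator (A + B)(u) = {a + B(u) : a ∈ A(u)} is maximal monotone. -/
import Mathlib


open RealInnerProductSpace

/-- If `A` is a maximal monotone set-valued operator with full domain and
`B` is a monotone continuous single-valued operator, then the set-valued operator
`(A + B)(u) = {a + B u : a ∈ A u}` is maximal monotone (i.e. it is monotone and satisfies
the maximality property). -/
theorem sum_maximal_monotone
    {H : Type*} [NormedAddCommGroup H] [InnerProductSpace ℝ H] [CompleteSpace H]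
    (A : H → Set H) (B : H → H)
    (hAdom : ∀ u : H, (A u).Nonempty)
    (hAmono : ∀ u v : H, ∀ a ∈ A u, ∀ b ∈ A v, 0 ≤ ⟪a - b, u - v⟫)
    (hAmax : ∀ u v : H, (∀ w : H, ∀ z ∈ A w, 0 ≤ ⟪u - w, v - z⟫) → v ∈ A u)
    (hBmono : ∀ u v : H, 0 ≤ ⟪B u - B v, u - v⟫)
    (hBcont : Continuous B)
    (S : H → Set H) (hS : ∀ x : H, S x = {y : H | ∃ a ∈ A x, y = a + B x}) :
    (∀ u v : H, ∀ a ∈ S u, ∀ b ∈ S v, 0 ≤ ⟪a - b, u - v⟫) ∧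
    (∀ u v : H, (∀ w : H, ∀ z ∈ S w, 0 ≤ ⟪u - w, v - z⟫) → v ∈ S u) := by
  constructor
  · intro u v a ha b hb
    rw [hS] at ha hb
    obtain ⟨a', ha', rfl⟩ := ha
    obtain ⟨b', hb', rfl⟩ := hb
    have h1 := hAmono u v a' ha' b' hb'
    have h2 := hBmono u v
    have : (a' + B u) - (b' + B v) = (a' - b') + (B u - B v) := by abel
    rw [this, inner_add_left]
    linarith
  · intro u v h
    rw [hS]
    refine ⟨v - B u, ?_, by abel⟩
    apply hAmax
    intro w z hz
    -- key continuity argument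
    set g : ℝ → ℝ := fun t => ⟪u - w, v - B (u + t • (w - u)) - z⟫ with hg
    have hgcont : Continuous g := by
      apply continuous_const.inner
      exact (continuous_const.sub
        (hBcont.comp (continuous_const.add (continuous_id.smul continuous_const)))).sub
        continuous_const
    have hpos : ∀ t ∈ Set.Ioo (0:ℝ) 1, 0 ≤ g t := by
      intro t ht
      obtain ⟨zt, hzt⟩ := hAdom (u + t • (w - u))
      have h1 : 0 ≤ ⟪u - (u + t • (w - u)), v - (zt + B (u + t • (w - u)))⟫ := by
        apply h
        rw [hS]
        exact ⟨zt, hzt, rfl⟩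
      have e1 : u - (u + t • (w - u)) = t • (u - w) := by
        module
      rw [e1, real_inner_smul_left] at h1
      have h1' : 0 ≤ ⟪u - w, v - (zt + B (u + t • (w - u)))⟫ :=
        nonneg_of_mul_nonneg_right h1 ht.1
      have h2 : 0 ≤ ⟪zt - z, (u + t • (w - u)) - w⟫ := hAmono _ _ _ hzt _ hz
      have e2 : (u + t • (w - u)) - w = (1 - t) • (u - w) := by
        module
      rw [e2, real_inner_smul_right] at h2
      have h2' : 0 ≤ ⟪zt - z, u - w⟫ :=
        nonneg_of_mul_nonneg_right h2 (by linarith [ht.2])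
      have e3 : v - B (u + t • (w - u)) - z
          = (v - (zt + B (u + t • (w - u)))) + (zt - z) := by abel
      simp only [hg, e3, inner_add_right]
      rw [real_inner_comm (u - w) (zt - z)] at *
      linarith
    have hmem : Set.Ioo (0:ℝ) 1 ∈ nhdsWithin (0:ℝ) (Set.Ioi 0) :=
      Ioo_mem_nhdsGT_of_mem (by constructor <;> norm_num)
    have htend : Filter.Tendsto g (nhdsWithin (0:ℝ) (Set.Ioi 0)) (nhds (g 0)) :=
      (hgcont.tendsto 0).mono_left nhdsWithin_le_nhds
    have h0 : 0 ≤ g 0 :=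
      ge_of_tendsto htend (Filter.eventually_of_mem hmem hpos)
    have : g 0 = ⟪u - w, v - B u - z⟫ := by simp [hg]
    rw [this] at h0
    have e : v - B u - z = (v - B u) - z := by abel
    rwa [e] at h0
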